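/- Let G be a connected finite simple graph on N ≥ 2 vertices, with adjacency matrix A, orthonormal eigenbasis {u_k} with eigenvalues ε_k, and uniform overlaps w_k = (𝟙ᵀu_k)². Then (Σ_{k : ε_k < 0} w_k·|ε_k|) / (Σ_{k : ε_k > 0} ε_k) ≤ N/2 − √(N−1). -/

import Mathlib

open Matrix in
/-- For a connected finite simple graph `G` on `N ≥ 2` vertices, with
adjacency matrix `A = G.adjMatrix ℝ`, orthonormal eigenbasis `u k` with eigenvalues
`ε k` and uniform overlaps `w k = (𝟙ᵀ u k)²`, the ratio
`(Σ_{ε_k<0} w_k |ε_k|) / (Σ_{ε_k>0} ε_k)` is at most `N/2 - √(N-1)`. -/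
theorem stmt_5 {N : ℕ} (hN : 2 ≤ N) (G : SimpleGraph (Fin N)) [DecidableRel G.Adj]
    (hconn : G.Connected)
    (u : Fin N → Fin N → ℝ) (ε : Fin N → ℝ)
    (horth : ∀ k l, (∑ i, u k i * u l i) = if k = l then (1 : ℝ) else 0)
    (heig : ∀ k, (G.adjMatrix ℝ).mulVec (u k) = ε k • u k) :
    (∑ k ∈ Finset.univ.filter (fun k => ε k < 0), (∑ i, u k i) ^ 2 * |ε k|) /
        (∑ k ∈ Finset.univ.filter (fun k => 0 < ε k), ε k) ≤
      (N : ℝ) / 2 - Real.sqrt ((N : ℝ) - 1) := by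
  classical
  haveI : Nonempty (Fin N) := ⟨⟨0, by omega⟩⟩
  have hNR : (2:ℝ) ≤ (N:ℝ) := by exact_mod_cast hN
  set A : Matrix (Fin N) (Fin N) ℝ := G.adjMatrix ℝ with hAdef
  have hA0 : ∀ i j, 0 ≤ A i j := by
    intro i j
    simp only [hAdef, SimpleGraph.adjMatrix_apply]
    split <;> norm_num
  have hA1 : ∀ i j, A i j ≤ 1 := by
    intro i j
    simp only [hAdef, SimpleGraph.adjMatrix_apply]
    split <;> norm_num
  have hAdiag : ∀ i, A i i = 0 := by
    intro i; simp [hAdef]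
  -- pointwise eigen-equation
  have hpt : ∀ k i, (∑ j, A i j * u k j) = ε k * u k i := by
    intro k i
    have := congrFun (heig k) i
    simpa [Matrix.mulVec, dotProduct] using this
  -- completeness of the eigenbasis
  have hUUt : (Matrix.of u) * (Matrix.of u)ᵀ = 1 := by
    ext k l
    simpa [Matrix.mul_apply, Matrix.one_apply] using horth k l
  have hUtU := mul_eq_one_comm.mp hUUt
  have hcompl : ∀ i j, (∑ k, u k i * u k j) = if i = j then (1:ℝ) else 0 := by
    intro i j
    have := congrFun (congrFun hUtU i) j
    simpa [Matrix.mul_apply, Matrix.transpose_apply, Matrix.one_apply, mul_comm] using this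
  -- expansion in the eigenbasis
  have hexp : ∀ (y : Fin N → ℝ) (j : Fin N), (∑ k, (∑ i, y i * u k i) * u k j) = y j := by
    intro y j
    calc (∑ k, (∑ i, y i * u k i) * u k j)
        = ∑ k, ∑ i, y i * (u k i * u k j) := by
          simp_rw [Finset.sum_mul, mul_assoc]
      _ = ∑ i, ∑ k, y i * (u k i * u k j) := Finset.sum_comm
      _ = ∑ i, y i * ∑ k, u k i * u k j := by simp_rw [← Finset.mul_sum]
      _ = y j := by simp [hcompl]
  -- Parseval
  have hpar : ∀ y : Fin N → ℝ, (∑ k, (∑ i, y i * u k i)^2) = ∑ i, (y i)^2 := by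
    intro y
    calc (∑ k, (∑ i, y i * u k i)^2)
        = ∑ k, ∑ j, y j * ((∑ i, y i * u k i) * u k j) := by
          refine Finset.sum_congr rfl fun k _ => ?_
          rw [sq, Finset.mul_sum]
          exact Finset.sum_congr rfl fun j _ => by ring
      _ = ∑ j, ∑ k, y j * ((∑ i, y i * u k i) * u k j) := Finset.sum_comm
      _ = ∑ j, y j * ∑ k, ((∑ i, y i * u k i) * u k j) := by simp_rw [← Finset.mul_sum]
      _ = ∑ j, y j * y j := by simp_rw [hexp]
      _ = ∑ i, (y i)^2 := by simp [sq]
  -- Rayleigh expansion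
  have hray : ∀ y : Fin N → ℝ,
      (∑ i, y i * ∑ j, A i j * y j) = ∑ k, ε k * (∑ i, y i * u k i)^2 := by
    intro y
    have h1 : ∀ i, (∑ j, A i j * y j) = ∑ k, (∑ l, y l * u k l) * (ε k * u k i) := by
      intro i
      calc (∑ j, A i j * y j)
          = ∑ j, A i j * ∑ k, (∑ l, y l * u k l) * u k j := by
            refine Finset.sum_congr rfl fun j _ => ?_
            rw [hexp y j]
        _ = ∑ k, (∑ l, y l * u k l) * ∑ j, A i j * u k j := by
            simp_rw [Finset.mul_sum]
            rw [Finset.sum_comm]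
            exact Finset.sum_congr rfl fun k _ =>
              Finset.sum_congr rfl fun j _ => by ring
        _ = ∑ k, (∑ l, y l * u k l) * (ε k * u k i) := by simp_rw [hpt]
    calc (∑ i, y i * ∑ j, A i j * y j)
        = ∑ i, ∑ k, (∑ l, y l * u k l) * (ε k * (y i * u k i)) := by
          refine Finset.sum_congr rfl fun i _ => ?_
          rw [h1 i, Finset.mul_sum]
          exact Finset.sum_congr rfl fun k _ => by ring
      _ = ∑ k, ∑ i, (∑ l, y l * u k l) * (ε k * (y i * u k i)) := Finset.sum_comm
      _ = ∑ k, ε k * (∑ i, y i * u k i)^2 := by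
          refine Finset.sum_congr rfl fun k _ => ?_
          calc (∑ i, (∑ l, y l * u k l) * (ε k * (y i * u k i)))
              = ∑ i, ε k * ((∑ l, y l * u k l) * (y i * u k i)) :=
                Finset.sum_congr rfl fun i _ => by ring
            _ = ε k * ∑ i, (∑ l, y l * u k l) * (y i * u k i) :=
                (Finset.mul_sum _ _ _).symm
            _ = ε k * ((∑ l, y l * u k l) * ∑ i, y i * u k i) := by
                rw [← Finset.mul_sum]
            _ = ε k * (∑ i, y i * u k i)^2 := by rw [sq]
  -- norms
  have hnorm : ∀ k, (∑ i, u k i * u k i) = 1 := by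
    intro k; simpa using horth k k
  -- degrees ≥ 1
  have hadj : ∀ i, ∃ j, G.Adj i j := by
    intro i
    haveI : Nontrivial (Fin N) := Fin.nontrivial_iff_two_le.mpr hN
    obtain ⟨j, hj⟩ := exists_ne i
    obtain ⟨p⟩ := hconn.preconnected i j
    exact ⟨p.getVert 1, p.adj_snd (p.not_nil_of_ne (Ne.symm hj))⟩
  have hd1 : ∀ i, (1:ℝ) ≤ ∑ j, A i j := by
    intro i
    obtain ⟨j, hj⟩ := hadj i
    have h1 : A i j = 1 := by simp [hAdef, hj]
    calc (1:ℝ) = A i j := h1.symm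
      _ ≤ ∑ j', A i j' := Finset.single_le_sum (fun j' _ => hA0 i j') (Finset.mem_univ j)
  set T : ℝ := ∑ i, ∑ j, A i j with hTdef
  have hTge : (N:ℝ) ≤ T := by
    calc (N:ℝ) = ∑ _i : Fin N, (1:ℝ) := by simp
      _ ≤ T := Finset.sum_le_sum fun i _ => hd1 i
  have hTray : (∑ k, ε k * (∑ i, u k i)^2) = T := by
    have := hray (fun _ => 1)
    simpa [hTdef] using this.symm
  -- the top eigenvalue
  obtain ⟨k0, -, hk0⟩ := Finset.exists_max_image Finset.univ ε Finset.univ_nonempty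
  set M : ℝ := ε k0 with hMdef
  have hM0 : 0 < M := by
    by_contra h
    push_neg at h
    have hle : (∑ k, ε k * (∑ i, u k i)^2) ≤ 0 :=
      Finset.sum_nonpos fun k _ =>
        mul_nonpos_of_nonpos_of_nonneg (le_trans (hk0 k (Finset.mem_univ k)) h) (sq_nonneg _)
    rw [hTray] at hle
    linarith
  -- Rayleigh bound
  have hraybd : ∀ y : Fin N → ℝ, (∑ i, y i * ∑ j, A i j * y j) ≤ M * ∑ i, (y i)^2 := by
    intro y
    rw [hray y, ← hpar y, Finset.mul_sum]
    exact Finset.sum_le_sum fun k _ =>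
      mul_le_mul_of_nonneg_right (hk0 k (Finset.mem_univ k)) (sq_nonneg _)
  have hQu : ∀ k, (∑ i, u k i * ∑ j, A i j * u k j) = ε k := by
    intro k
    calc (∑ i, u k i * ∑ j, A i j * u k j)
        = ∑ i, u k i * (ε k * u k i) := by simp_rw [hpt]
      _ = ε k * ∑ i, u k i * u k i := by
          rw [Finset.mul_sum]; exact Finset.sum_congr rfl fun i _ => by ring
      _ = ε k := by rw [hnorm k, mul_one]
  -- |ε k| ≤ M
  have habs : ∀ k, |ε k| ≤ M := by
    intro k
    rw [abs_le]
    refine ⟨?_, hk0 k (Finset.mem_univ k)⟩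
    have key : 0 ≤ (∑ i, u k i * ∑ j, A i j * u k j)
        + (∑ i, |u k i| * ∑ j, A i j * |u k j|) := by
      rw [← Finset.sum_add_distrib]
      refine Finset.sum_nonneg fun i _ => ?_
      rw [Finset.mul_sum, Finset.mul_sum, ← Finset.sum_add_distrib]
      refine Finset.sum_nonneg fun j _ => ?_
      have h2 : u k i * (A i j * u k j) + |u k i| * (A i j * |u k j|)
          = A i j * (u k i * u k j + |u k i * u k j|) := by
        rw [abs_mul]; ring
      rw [h2]
      exact mul_nonneg (hA0 i j) (by linarith [neg_abs_le (u k i * u k j)])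
    have hsq1 : (∑ i, |u k i|^2) = 1 := by
      simp_rw [sq_abs]
      calc (∑ i, u k i ^ 2) = ∑ i, u k i * u k i := by simp [sq]
        _ = 1 := hnorm k
    have hQabs : (∑ i, |u k i| * ∑ j, A i j * |u k j|) ≤ M := by
      calc (∑ i, |u k i| * ∑ j, A i j * |u k j|) ≤ M * ∑ i, |u k i|^2 :=
            hraybd (fun i => |u k i|)
        _ = M := by rw [hsq1, mul_one]
    have := hQu k
    linarith
  -- Hong-type bound : M^2 ≤ T - N + 1
  obtain ⟨i0, -, hi0⟩ := Finset.exists_max_image Finset.univ (fun i => |u k0 i|) Finset.univ_nonempty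
  have hi0pos : 0 < |u k0 i0| := by
    rcases lt_or_ge 0 (|u k0 i0|) with h | h
    · exact h
    · exfalso
      have hz : ∀ i, u k0 i = 0 := by
        intro i
        have := hi0 i (Finset.mem_univ i)
        have : |u k0 i| ≤ 0 := le_trans this h
        simpa [abs_nonpos_iff] using this
      have := hnorm k0
      simp [hz] at this
  have hM2 : M^2 ≤ ∑ l, A i0 l * ∑ j, A l j := by
    have e1 : (∑ l, A i0 l * (ε k0 * u k0 l)) = M * (M * u k0 i0) := by
      calc (∑ l, A i0 l * (ε k0 * u k0 l))
          = M * ∑ l, A i0 l * u k0 l := by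
            rw [Finset.mul_sum]; exact Finset.sum_congr rfl fun l _ => by ring
        _ = M * (M * u k0 i0) := by rw [hpt k0 i0]
    have e2 : M^2 * |u k0 i0| = |∑ l, A i0 l * ∑ j, A l j * u k0 j| := by
      have : (∑ l, A i0 l * ∑ j, A l j * u k0 j) = ∑ l, A i0 l * (ε k0 * u k0 l) := by
        refine Finset.sum_congr rfl fun l _ => ?_
        rw [hpt k0 l]
      rw [this, e1, abs_mul, abs_mul, abs_of_pos hM0]
      ring
    have e3 : |∑ l, A i0 l * ∑ j, A l j * u k0 j|
        ≤ (∑ l, A i0 l * ∑ j, A l j) * |u k0 i0| := by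
      calc |∑ l, A i0 l * ∑ j, A l j * u k0 j|
          ≤ ∑ l, |A i0 l * ∑ j, A l j * u k0 j| := Finset.abs_sum_le_sum_abs _ _
        _ ≤ ∑ l, A i0 l * ((∑ j, A l j) * |u k0 i0|) := by
            refine Finset.sum_le_sum fun l _ => ?_
            rw [abs_mul, abs_of_nonneg (hA0 i0 l)]
            refine mul_le_mul_of_nonneg_left ?_ (hA0 i0 l)
            calc |∑ j, A l j * u k0 j| ≤ ∑ j, |A l j * u k0 j| :=
                  Finset.abs_sum_le_sum_abs _ _
              _ ≤ ∑ j, A l j * |u k0 i0| := by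
                  refine Finset.sum_le_sum fun j _ => ?_
                  rw [abs_mul, abs_of_nonneg (hA0 l j)]
                  exact mul_le_mul_of_nonneg_left (hi0 j (Finset.mem_univ j)) (hA0 l j)
              _ = (∑ j, A l j) * |u k0 i0| := (Finset.sum_mul _ _ _).symm
        _ = (∑ l, A i0 l * ∑ j, A l j) * |u k0 i0| := by
            rw [Finset.sum_mul]
            exact Finset.sum_congr rfl fun l _ => by ring
    have e4 : M^2 * |u k0 i0| ≤ (∑ l, A i0 l * ∑ j, A l j) * |u k0 i0| := by
      rw [e2]; exact e3
    exact le_of_mul_le_mul_right e4 hi0pos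
  have hHong : M^2 ≤ T - N + 1 := by
    have hAi0 : A i0 i0 = 0 := hAdiag i0
    set S := Finset.univ.erase i0 with hSdef
    have hcard : (S.card : ℝ) = (N:ℝ) - 1 := by
      rw [hSdef, Finset.card_erase_of_mem (Finset.mem_univ i0), Finset.card_univ, Fintype.card_fin]
      have : 1 ≤ N := by omega
      push_cast [Nat.cast_sub this]
      ring
    have hsum1 : (∑ l, A i0 l * ∑ j, A l j) = ∑ l ∈ S, A i0 l * ∑ j, A l j := by
      rw [hSdef, ← Finset.add_sum_erase _ _ (Finset.mem_univ i0), hAi0]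
      ring_nf
    have hsum2 : (∑ l, A i0 l) = ∑ l ∈ S, A i0 l := by
      rw [hSdef, ← Finset.add_sum_erase _ _ (Finset.mem_univ i0), hAi0]
      ring_nf
    have hsum3 : T = (∑ j, A i0 j) + ∑ l ∈ S, ∑ j, A l j := by
      rw [hTdef, hSdef, ← Finset.add_sum_erase _ _ (Finset.mem_univ i0)]
    have hper : ∑ l ∈ S, (A i0 l * (∑ j, A l j) + (1 - A i0 l)) ≤ ∑ l ∈ S, ∑ j, A l j := by
      refine Finset.sum_le_sum fun l _ => ?_
      have h1 := hd1 l
      have h2 := hA1 i0 l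
      have h3 := hA0 i0 l
      nlinarith
    rw [Finset.sum_add_distrib, Finset.sum_sub_distrib, Finset.sum_const, nsmul_eq_mul] at hper
    have hdi0 : (∑ l ∈ S, A i0 l) = ∑ l, A i0 l := hsum2.symm
    have key : (∑ l, A i0 l * ∑ j, A l j) ≤ T - N + 1 := by
      rw [hsum1]
      have h4 := hd1 i0
      have h5 : (∑ l, A i0 l) ≤ ∑ j, A i0 j + 0 := by simp
      rw [hcard, hdi0] at hper
      linarith [hsum3.ge, hd1 i0]
    linarith [hM2]
  -- overall bounds on numerator and denominator
  set Num : ℝ := ∑ k ∈ Finset.univ.filter (fun k => ε k < 0), (∑ i, u k i) ^ 2 * |ε k| with hNumdef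
  set D : ℝ := ∑ k ∈ Finset.univ.filter (fun k => 0 < ε k), ε k with hDdef
  have hNum0 : 0 ≤ Num :=
    Finset.sum_nonneg fun k _ => mul_nonneg (sq_nonneg _) (abs_nonneg _)
  have hDge : M ≤ D := by
    refine Finset.single_le_sum (f := ε) (fun k hk => ?_) ?_
    · exact le_of_lt (Finset.mem_filter.mp hk).2
    · exact Finset.mem_filter.mpr ⟨Finset.mem_univ k0, hM0⟩
  have hD0 : 0 < D := lt_of_lt_of_le hM0 hDge
  have hparse1 : (∑ k, (∑ i, u k i)^2) = (N:ℝ) := by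
    have := hpar (fun _ => 1)
    simpa using this
  have hsumabs : (∑ k, (∑ i, u k i)^2 * |ε k|) ≤ (N:ℝ) * M := by
    calc (∑ k, (∑ i, u k i)^2 * |ε k|) ≤ ∑ k, (∑ i, u k i)^2 * M :=
          Finset.sum_le_sum fun k _ =>
            mul_le_mul_of_nonneg_left (habs k) (sq_nonneg _)
      _ = (N:ℝ) * M := by rw [← Finset.sum_mul, hparse1]
  have hkey : (∑ k, (∑ i, u k i)^2 * |ε k|) - (∑ k, ε k * (∑ i, u k i)^2) = 2 * Num := by
    rw [← Finset.sum_sub_distrib]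
    calc (∑ k, ((∑ i, u k i)^2 * |ε k| - ε k * (∑ i, u k i)^2))
        = ∑ k, (if ε k < 0 then (∑ i, u k i) ^ 2 * |ε k| * 2 else 0) := by
          refine Finset.sum_congr rfl fun k _ => ?_
          by_cases h : ε k < 0
          · rw [if_pos h, abs_of_neg h]; ring
          · rw [if_neg h, abs_of_nonneg (le_of_not_gt h)]; ring
      _ = ∑ k ∈ Finset.univ.filter (fun k => ε k < 0), (∑ i, u k i) ^ 2 * |ε k| * 2 :=
          (Finset.sum_filter _ _).symm
      _ = 2 * Num := by rw [hNumdef, ← Finset.sum_mul]; ring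
  have hNumle : Num ≤ ((N:ℝ) * M - T) / 2 := by
    have := hkey
    rw [hTray] at this
    linarith [hsumabs]
  -- final arithmetic
  have hsqrt : Real.sqrt ((N:ℝ) - 1) ≤ T / (2 * M) := by
    have h1 : ((N:ℝ) - 1) * M^2 ≤ (T/2)^2 := by
      nlinarith [sq_nonneg (T - 2*((N:ℝ)-1)),
        mul_nonneg (by linarith : (0:ℝ) ≤ (N:ℝ)-1) (by linarith : (0:ℝ) ≤ T - (N:ℝ) + 1 - M^2)]
    have h2 : Real.sqrt ((N:ℝ)-1) * M = Real.sqrt (((N:ℝ)-1) * M^2) := by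
      rw [Real.sqrt_mul (by linarith), Real.sqrt_sq hM0.le]
    have h3 : Real.sqrt (((N:ℝ)-1) * M^2) ≤ T/2 := by
      calc Real.sqrt (((N:ℝ)-1)*M^2) ≤ Real.sqrt ((T/2)^2) := Real.sqrt_le_sqrt h1
        _ = T/2 := Real.sqrt_sq (by linarith)
    rw [le_div_iff₀ (by positivity)]
    calc Real.sqrt ((N:ℝ)-1) * (2*M) = 2 * (Real.sqrt ((N:ℝ)-1) * M) := by ring
      _ ≤ 2 * (T/2) := by rw [h2]; linarith
      _ = T := by ring
  calc Num / D ≤ Num / M := div_le_div_of_nonneg_left hNum0 hM0 hDge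
    _ ≤ (((N:ℝ) * M - T) / 2) / M := by
        exact div_le_div_of_nonneg_right hNumle hM0.le
    _ = (N:ℝ)/2 - T/(2*M) := by field_simp
    _ ≤ (N:ℝ)/2 - Real.sqrt ((N:ℝ)-1) := by linarith [hsqrt]
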